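/- For every integer n ≥ 1, the set PC_n of all automorphisms α of the free group F_n for which there exist a permutation π of {1, …, n} and words w_1, …, w_n ∈ F_n with α(x_i) = w_i⁻¹ x_{π(i)} w_i for all i (the permutation-conjugacy automorphisms), is a subgroup of Aut(F_n), and this subgroup equals the subgroup of Aut(F_n) generated by {σ_1, …, σ_{n−1}, ρ_1, …, ρ_{n−1}}. -/

import Mathlib

namespace LoopBraidGroups

/-- The `i`-th generator `x_i` of the free group of rank `n`
(with junk value `1` when `i ≥ n`); indices are `0`-based. -/
def xg (n i : ℕ) : FreeGroup (Fin n) :=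
  if h : i < n then FreeGroup.of (⟨i, h⟩ : Fin n) else 1

/-- `IsSigma n i s` : `s` is the automorphism `σ_i` of the free group of rank `n`,
sending `x_i ↦ x_{i+1}`, `x_{i+1} ↦ x_{i+1}⁻¹ x_i x_{i+1}` and fixing the
other generators. -/
def IsSigma (n i : ℕ) (s : MulAut (FreeGroup (Fin n))) : Prop :=
  s (xg n i) = xg n (i + 1) ∧
    s (xg n (i + 1)) = (xg n (i + 1))⁻¹ * xg n i * xg n (i + 1) ∧
    ∀ j, j < n → j ≠ i → j ≠ i + 1 → s (xg n j) = xg n j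

/-- `IsRho n i r` : `r` is the automorphism `ρ_i`, exchanging `x_i` and `x_{i+1}`
and fixing the other generators. -/
def IsRho (n i : ℕ) (r : MulAut (FreeGroup (Fin n))) : Prop :=
  r (xg n i) = xg n (i + 1) ∧ r (xg n (i + 1)) = xg n i ∧
    ∀ j, j < n → j ≠ i → j ≠ i + 1 → r (xg n j) = xg n j

/-- The set `PC_n` of permutation-conjugacy automorphisms `α` of the free group of
rank `n`: those with `α(x_i) = w_i⁻¹ x_{π(i)} w_i` for some permutation `π` and
words `w_i`. -/
def PCSet (n : ℕ) : Set (MulAut (FreeGroup (Fin n))) :=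
  {α | ∃ (π : Equiv.Perm (Fin n)) (w : Fin n → FreeGroup (Fin n)),
      ∀ i : Fin n, α (FreeGroup.of i) = (w i)⁻¹ * FreeGroup.of (π i) * w i}



open FreeGroup List

set_option linter.unusedSectionVars false

variable {α : Type*} [DecidableEq α]

/-- The "no cancellation" relation on letters. -/
def NC (p q : α × Bool) : Prop := ¬(p.1 = q.1 ∧ p.2 = !q.2)

/-- A word is reduced. -/
def Rd (l : List (α × Bool)) : Prop := List.Chain' NC l

lemma Rd.nil : Rd ([] : List (α × Bool)) := List.isChain_nil

lemma NC.symm {p q : α × Bool} (h : NC p q) : NC q p := by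
  rintro ⟨h1, h2⟩
  exact h ⟨h1.symm, by cases p; cases q; simp_all⟩

lemma reduce_eq_self_of_rd : ∀ {l : List (α × Bool)}, Rd l → FreeGroup.reduce l = l
  | [], _ => rfl
  | [x], _ => rfl
  | x :: y :: l, h => by
      have h2 : FreeGroup.reduce (y :: l) = y :: l :=
        reduce_eq_self_of_rd (List.isChain_cons_cons.1 h).2
      rw [FreeGroup.reduce.cons, h2]
      have hxy : NC x y := (List.isChain_cons_cons.1 h).1
      exact if_neg hxy

lemma rd_of_reduce_eq_self : ∀ {l : List (α × Bool)}, FreeGroup.reduce l = l → Rd l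
  | [], _ => Rd.nil
  | [x], _ => List.isChain_singleton x
  | x :: y :: l, h => by
      have hlen : (FreeGroup.reduce (y :: l)).length ≤ (y :: l).length :=
        (FreeGroup.Red.length_le (FreeGroup.reduce.red))
      rw [FreeGroup.reduce.cons] at h
      rcases heq : FreeGroup.reduce (y :: l) with _ | ⟨z, zs⟩
      · rw [heq] at h; simp at h
      · rw [heq] at h
        simp only [] at h
        by_cases hc : x.1 = z.1 ∧ x.2 = !z.2
        · rw [if_pos hc] at h
          rw [heq] at hlen
          subst h
          simp at hlen
        · rw [if_neg hc] at h
          have h2 : z :: zs = y :: l := by injection h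
          injection h2 with hy hl
          subst hy; subst hl
          exact List.isChain_cons_cons.2 ⟨hc, rd_of_reduce_eq_self heq⟩

lemma rd_toWord (x : FreeGroup α) : Rd x.toWord :=
  rd_of_reduce_eq_self (FreeGroup.reduce_toWord x)

lemma toWord_mk_rd {l : List (α × Bool)} (h : Rd l) : (FreeGroup.mk l).toWord = l := by
  rw [FreeGroup.toWord_mk, reduce_eq_self_of_rd h]

lemma Rd.append_left {a b : List (α × Bool)} (h : Rd (a ++ b)) : Rd a :=
  (List.isChain_append.1 h).1

lemma Rd.append_right {a b : List (α × Bool)} (h : Rd (a ++ b)) : Rd b :=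
  (List.isChain_append.1 h).2.1

lemma rd_invRev {l : List (α × Bool)} (h : Rd l) : Rd (FreeGroup.invRev l) := by
  unfold FreeGroup.invRev Rd List.Chain'
  rw [List.isChain_reverse]
  rw [List.isChain_map]
  refine List.IsChain.imp ?_ h
  rintro p q hpq ⟨h1, h2⟩
  exact hpq ⟨h1.symm, by cases p; cases q; simp_all⟩

lemma head?_invRev (l : List (α × Bool)) :
    (FreeGroup.invRev l).head? = l.getLast?.map (fun p => (p.1, !p.2)) := by
  unfold FreeGroup.invRev
  rw [List.head?_reverse, List.getLast?_map]

lemma getLast?_invRev (l : List (α × Bool)) :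
    (FreeGroup.invRev l).getLast? = l.head?.map (fun p => (p.1, !p.2)) := by
  unfold FreeGroup.invRev
  rw [List.getLast?_reverse, List.head?_map]

/-- maximal common suffix decomposition -/
lemma exists_max_common_prefix {β : Type*} (X Y : List β) :
    ∃ c a b, X = c ++ a ∧ Y = c ++ b ∧ (a = [] ∨ b = [] ∨ a.head? ≠ b.head?) := by
  classical
  induction X generalizing Y with
  | nil => exact ⟨[], [], Y, by simp, by simp, Or.inl rfl⟩
  | cons x X ih =>
    cases Y with
    | nil => exact ⟨[], x :: X, [], rfl, rfl, Or.inr (Or.inl rfl)⟩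
    | cons y Y =>
      by_cases hxy : x = y
      · obtain ⟨c, a, b, h1, h2, h3⟩ := ih Y
        exact ⟨x :: c, a, b, by simp [h1], by simp [hxy, h2], h3⟩
      · exact ⟨[], x :: X, y :: Y, rfl, rfl, Or.inr (Or.inr (by simp [hxy]))⟩

lemma exists_max_common_suffix {β : Type*} (X Y : List β) :
    ∃ a b c, X = a ++ c ∧ Y = b ++ c ∧ (a = [] ∨ b = [] ∨ a.getLast? ≠ b.getLast?) := by
  obtain ⟨c, a, b, h1, h2, h3⟩ := exists_max_common_prefix X.reverse Y.reverse
  refine ⟨a.reverse, b.reverse, c.reverse, ?_, ?_, ?_⟩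
  · rw [← List.reverse_reverse X, h1]; simp
  · rw [← List.reverse_reverse Y, h2]; simp
  · simpa [List.getLast?_reverse] using h3


lemma rd_append {α : Type*} {X Y : List (α × Bool)} (hX : Rd X) (hY : Rd Y)
    (hJ : ∀ x ∈ X.getLast?, ∀ y ∈ Y.head?, NC x y) : Rd (X ++ Y) :=
  List.isChain_append.2 ⟨hX, hY, hJ⟩

lemma rd_append_junction {α : Type*} {X Y : List (α × Bool)} (h : Rd (X ++ Y)) :
    ∀ x ∈ X.getLast?, ∀ y ∈ Y.head?, NC x y :=
  (List.isChain_append.1 h).2.2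

lemma invRev_ne_nil {α : Type*} {b : List (α × Bool)} (h : b ≠ []) :
    FreeGroup.invRev b ≠ [] := by
  simp [FreeGroup.invRev, h]

variable {n : ℕ}

lemma beta_single (β : MulAut (FreeGroup (Fin n))) (w : Fin n → FreeGroup (Fin n))
    (hβ : ∀ i, β (FreeGroup.of i) = (w i)⁻¹ * FreeGroup.of i * w i)
    (l : Fin n × Bool) :
    β (FreeGroup.mk [l]) = (w l.1)⁻¹ * FreeGroup.mk [l] * w l.1 := by
  obtain ⟨a, s⟩ := l
  cases s
  · have h1 : FreeGroup.mk [(a, false)] = (FreeGroup.of a)⁻¹ := by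
      have h2 := FreeGroup.inv_mk (L := [(a, true)])
      simp only [FreeGroup.invRev, List.map_cons, List.map_nil, List.reverse_cons,
        List.reverse_nil, Bool.not_true, List.nil_append] at h2
      rw [← h2]; rfl
    rw [h1, _root_.map_inv β, hβ]
    simp [mul_assoc]
  · have h1 : FreeGroup.mk [(a, true)] = FreeGroup.of a := rfl
    rw [h1, hβ]

theorem nielsen (β : MulAut (FreeGroup (Fin n))) (w : Fin n → FreeGroup (Fin n))
    (hβ : ∀ i, β (FreeGroup.of i) = (w i)⁻¹ * FreeGroup.of i * w i)
    (hC1 : ∀ i : Fin n, ∀ p ∈ ((w i).toWord).head?, p.1 ≠ i)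
    (hC2 : ∀ (i k : Fin n) (s : Bool), ¬ (((i, s) :: (w i).toWord) <:+ (w k).toWord)) :
    ∀ (L : List (Fin n × Bool)) (l : Fin n × Bool), Rd (L ++ [l]) →
      ∃ A, (β (FreeGroup.mk (L ++ [l]))).toWord = A ++ [l] ++ (w l.1).toWord := by
  intro L
  induction L using List.reverseRecOn with
  | nil =>
    intro l _
    refine ⟨FreeGroup.invRev ((w l.1).toWord), ?_⟩
    have hval : β (FreeGroup.mk ([] ++ [l])) =
        FreeGroup.mk (FreeGroup.invRev ((w l.1).toWord) ++ [l] ++ (w l.1).toWord) := by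
      simp only [List.nil_append]
      rw [beta_single β w hβ l]
      have h1 : w l.1 = FreeGroup.mk ((w l.1).toWord) := (FreeGroup.mk_toWord).symm
      conv_lhs => rw [h1]
      rw [FreeGroup.inv_mk, FreeGroup.mul_mk, FreeGroup.mul_mk]
    rw [hval]
    refine toWord_mk_rd ?_
    refine rd_append (rd_append (rd_invRev (rd_toWord _)) (List.isChain_singleton l) ?_)
      (rd_toWord _) ?_
    · intro x hx y hy
      simp only [List.head?_cons, Option.mem_some_iff] at hy
      subst hy
      rw [getLast?_invRev] at hx
      simp only [Option.mem_def, Option.map_eq_some_iff] at hx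
      obtain ⟨p, hp, rfl⟩ := hx
      rintro ⟨h1, _⟩
      exact hC1 l.1 p hp h1
    · intro x hx y hy
      rw [List.getLast?_append_of_ne_nil _ (by simp)] at hx
      simp only [List.getLast?_singleton, Option.mem_some_iff] at hx
      subst hx
      rintro ⟨h1, _⟩
      exact hC1 l.1 y hy h1.symm
  | append_singleton L l' IH =>
    intro l hL
    have hLl' : Rd (L ++ [l']) := Rd.append_left hL
    obtain ⟨A, hA⟩ := IH l' hLl'
    obtain ⟨a, b, c, hWi, hWk, hmax⟩ :=
      exists_max_common_suffix ((w l'.1).toWord) ((w l.1).toWord)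
    have hval : β (FreeGroup.mk ((L ++ [l']) ++ [l])) =
        FreeGroup.mk ((A ++ [l']) ++ (a ++ (FreeGroup.invRev b ++ ([l] ++ (w l.1).toWord)))) := by
      have hsplit : FreeGroup.mk ((L ++ [l']) ++ [l]) =
          FreeGroup.mk (L ++ [l']) * FreeGroup.mk [l] := (FreeGroup.mul_mk).symm
      rw [hsplit, _root_.map_mul β, beta_single β w hβ l]
      have h1 : β (FreeGroup.mk (L ++ [l'])) = FreeGroup.mk (A ++ [l'] ++ (w l'.1).toWord) := by
        rw [← hA, FreeGroup.mk_toWord]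
      rw [h1]
      have h2 : w l.1 = FreeGroup.mk (b ++ c) := by rw [← hWk, FreeGroup.mk_toWord]
      conv_lhs => rw [h2]
      rw [show (w l.1).toWord = b ++ c from hWk, show (w l'.1).toWord = a ++ c from hWi]
      simp only [← List.append_assoc]
      simp only [← FreeGroup.mul_mk, ← FreeGroup.inv_mk]
      group
    rw [hval]
    have RdFull : Rd ((A ++ [l']) ++ (w l'.1).toWord) := by
      rw [← hA]; exact rd_toWord _
    have RdWi : Rd ((w l'.1).toWord) := rd_toWord _
    have RdWk : Rd ((w l.1).toWord) := rd_toWord _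
    have RdA : Rd (A ++ [l']) := Rd.append_left RdFull
    have Rda : Rd a := by rw [hWi] at RdWi; exact RdWi.append_left
    have Rdb : Rd b := by rw [hWk] at RdWk; exact RdWk.append_left
    have hlastA : (A ++ [l']).getLast? = some l' := by
      rw [List.getLast?_append_of_ne_nil _ (by simp)]; rfl
    have J5 : ∀ y ∈ ((w l.1).toWord).head?, NC l y := by
      intro y hy
      rintro ⟨h1, _⟩
      exact hC1 l.1 y hy h1.symm
    have Rdtail : Rd ([l] ++ (w l.1).toWord) := by
      refine rd_append (List.isChain_singleton l) (rd_toWord _) ?_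
      intro x hx y hy
      simp only [List.getLast?_singleton, Option.mem_some_iff] at hx
      subst hx
      exact J5 y hy
    have Rdmid : Rd (FreeGroup.invRev b ++ ([l] ++ (w l.1).toWord)) := by
      refine rd_append (rd_invRev Rdb) Rdtail ?_
      intro x hx y hy
      rw [getLast?_invRev] at hx
      simp only [Option.mem_def, Option.map_eq_some_iff] at hx
      obtain ⟨p, hp, rfl⟩ := hx
      simp only [List.singleton_append, List.head?_cons, Option.mem_some_iff] at hy
      subst hy
      have hbne : b ≠ [] := by rintro rfl; simp at hp
      have hpWk : p ∈ ((w l.1).toWord).head? := by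
        rw [hWk, List.head?_append_of_ne_nil _ hbne]
        exact hp
      rintro ⟨h1, _⟩
      exact hC1 l.1 p hpWk h1
    have Rdam : Rd (a ++ (FreeGroup.invRev b ++ ([l] ++ (w l.1).toWord))) := by
      refine rd_append Rda Rdmid ?_
      intro x hx y hy
      have hane : a ≠ [] := by rintro rfl; simp at hx
      by_cases hbz : b = []
      · subst hbz
        simp only [FreeGroup.invRev, List.map_nil, List.reverse_nil, List.nil_append,
          List.singleton_append, List.head?_cons, Option.mem_some_iff] at hy
        subst hy
        rintro ⟨h1, h2⟩
        refine hC2 l.1 l'.1 (!l.2) ⟨a.dropLast, ?_⟩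
        have hx' : a.dropLast ++ [x] = a := List.dropLast_append_getLast? x hx
        have hxeq : x = (l.1, !l.2) := Prod.ext h1 h2
        have hcW : c = (w l.1).toWord := by rw [hWk]; rfl
        rw [hWi, ← hx', hxeq, hcW]
        simp
      · rw [List.head?_append_of_ne_nil _ (invRev_ne_nil hbz)] at hy
        rw [head?_invRev] at hy
        simp only [Option.mem_def, Option.map_eq_some_iff] at hy
        obtain ⟨p, hp, rfl⟩ := hy
        rintro ⟨h1, h2⟩
        have hxp : x = p := by
          refine Prod.ext h1 ?_
          simpa using h2
        rcases hmax with hma | hmb | hml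
        · exact hane hma
        · exact hbz hmb
        · exact hml (by rw [show a.getLast? = some x from hx, hp, hxp])
    refine ⟨(A ++ [l']) ++ (a ++ FreeGroup.invRev b), ?_⟩
    have hassoc : (A ++ [l']) ++ (a ++ FreeGroup.invRev b) ++ [l] ++ (w l.1).toWord =
        (A ++ [l']) ++ (a ++ (FreeGroup.invRev b ++ ([l] ++ (w l.1).toWord))) := by
      simp [List.append_assoc]
    rw [hassoc]
    refine toWord_mk_rd ?_
    refine rd_append RdA Rdam ?_
    intro x hx y hy
    rw [hlastA, Option.mem_some_iff] at hx
    subst hx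
    by_cases haz : a = []
    · subst haz
      simp only [List.nil_append] at hy
      by_cases hbz : b = []
      · subst hbz
        simp only [FreeGroup.invRev, List.map_nil, List.reverse_nil, List.nil_append,
          List.singleton_append, List.head?_cons, Option.mem_some_iff] at hy
        subst hy
        have hJ := rd_append_junction (X := L ++ [l']) (Y := [l]) hL
        exact hJ l' (by rw [List.getLast?_append_of_ne_nil _ (by simp)]; rfl) l (by simp)
      · rw [List.head?_append_of_ne_nil _ (invRev_ne_nil hbz)] at hy
        rw [head?_invRev] at hy
        simp only [Option.mem_def, Option.map_eq_some_iff] at hy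
        obtain ⟨p, hp, rfl⟩ := hy
        rintro ⟨h1, h2⟩
        have hpl : p = (l'.1, l'.2) := by
          refine Prod.ext h1.symm ?_
          simpa using h2.symm
        refine hC2 l'.1 l.1 l'.2 ⟨b.dropLast, ?_⟩
        have hb' : b.dropLast ++ [p] = b := List.dropLast_append_getLast? p hp
        have hcW : c = (w l'.1).toWord := by simpa using hWi.symm
        rw [hWk, ← hb', hpl, ← hcW]
        simp
    · rw [List.head?_append_of_ne_nil _ haz] at hy
      have hyWi : y ∈ ((w l'.1).toWord).head? := by
        rw [hWi, List.head?_append_of_ne_nil _ haz]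
        exact hy
      exact rd_append_junction RdFull l' hlastA y hyWi

section Part3

variable {n : ℕ}

lemma mulAut_ext {f g : MulAut (FreeGroup (Fin n))}
    (h : ∀ a, f (FreeGroup.of a) = g (FreeGroup.of a)) : f = g :=
  MulEquiv.toMonoidHom_injective (FreeGroup.ext_hom _ _ h)

/-- permutations as automorphisms of the free group -/
def permHom (n : ℕ) : Equiv.Perm (Fin n) →* MulAut (FreeGroup (Fin n)) where
  toFun τ := FreeGroup.freeGroupCongr τ
  map_one' := by
    refine mulAut_ext fun a => ?_
    simp [FreeGroup.map.of]
  map_mul' τ₁ τ₂ := by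
    refine mulAut_ext fun a => ?_
    simp [FreeGroup.map.of, MulAut.mul_apply]

@[simp] lemma permHom_of (τ : Equiv.Perm (Fin n)) (a : Fin n) :
    permHom n τ (FreeGroup.of a) = FreeGroup.of (τ a) := by
  simp [permHom, FreeGroup.map.of]

lemma xg_eq {i : ℕ} (h : i < n) : xg n i = FreeGroup.of (⟨i, h⟩ : Fin n) := dif_pos h

/-- all of Perm (Fin n) lies in a subgroup containing adjacent transpositions -/
lemma perm_mem_of_adj (S : Subgroup (Equiv.Perm (Fin n)))
    (hS : ∀ (i : ℕ) (h : i + 1 < n),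
      Equiv.swap (⟨i, Nat.lt_of_succ_lt h⟩ : Fin n) ⟨i + 1, h⟩ ∈ S) :
    ∀ τ : Equiv.Perm (Fin n), τ ∈ S := by
  have hd : ∀ (d : ℕ) (a b : Fin n), a.val + d = b.val → Equiv.swap a b ∈ S := by
    intro d
    induction d with
    | zero =>
      intro a b hab
      have : a = b := Fin.ext (by omega)
      subst this
      rw [Equiv.swap_self]
      exact S.one_mem
    | succ d IH =>
      intro a b hab
      rcases Nat.eq_zero_or_pos d with hd0 | hdpos
      · subst hd0
        have hb : a.val + 1 < n := by rw [hab]; exact b.isLt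
        have ha : a = ⟨a.val, Nat.lt_of_succ_lt hb⟩ := Fin.ext rfl
        have hbb : b = ⟨a.val + 1, hb⟩ := Fin.ext (by simp; omega)
        rw [ha, hbb]
        exact hS a.val hb
      · set m : Fin n := ⟨a.val + d, by omega⟩ with hm
        have h1 : Equiv.swap m b ∈ S := by
          have hmb : m.val + 1 < n := by simp [hm]; omega
          have hm' : m = ⟨m.val, Nat.lt_of_succ_lt hmb⟩ := Fin.ext rfl
          have hb' : b = ⟨m.val + 1, hmb⟩ := Fin.ext (by simp [hm]; omega)
          rw [hm', hb']
          exact hS m.val hmb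
        have h2 : Equiv.swap a m ∈ S := IH a m rfl
        have key : Equiv.swap a b = Equiv.swap m b * Equiv.swap a m * (Equiv.swap m b)⁻¹ := by
          rw [← Equiv.swap_apply_apply]
          congr 1
          · rw [Equiv.swap_apply_of_ne_of_ne]
            · exact Fin.ne_of_val_ne (by simp [hm]; omega)
            · exact Fin.ne_of_val_ne (by omega)
          · exact (Equiv.swap_apply_left m b).symm
        rw [key]
        exact S.mul_mem (S.mul_mem h1 h2) (S.inv_mem h1)
  have hswap : ∀ a b : Fin n, Equiv.swap a b ∈ S := by
    intro a b
    rcases Nat.le_total a.val b.val with h | h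
    · exact hd (b.val - a.val) a b (by omega)
    · rw [Equiv.swap_comm]
      exact hd (a.val - b.val) b a (by omega)
  intro τ
  refine Equiv.Perm.swap_induction_on τ S.one_mem ?_
  intro f x y _ hf
  exact S.mul_mem (hswap x y) hf

variable {H : Subgroup (MulAut (FreeGroup (Fin n)))}

lemma permHom_mem
    (hr : ∀ i, i + 1 < n → ∃ r ∈ H, IsRho n i r) (τ : Equiv.Perm (Fin n)) :
    permHom n τ ∈ H := by
  refine perm_mem_of_adj (H.comap (permHom n)) ?_ τ
  intro i h
  obtain ⟨r, hrH, hr1, hr2, hr3⟩ := hr i h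
  have hin : i < n := Nat.lt_of_succ_lt h
  have : permHom n (Equiv.swap (⟨i, hin⟩ : Fin n) ⟨i + 1, h⟩) = r := by
    refine mulAut_ext fun a => ?_
    rw [permHom_of]
    by_cases ha1 : a = ⟨i, hin⟩
    · subst ha1
      rw [Equiv.swap_apply_left]
      rw [xg_eq hin, xg_eq h] at hr1
      exact hr1.symm
    · by_cases ha2 : a = ⟨i + 1, h⟩
      · subst ha2
        rw [Equiv.swap_apply_right]
        rw [xg_eq hin, xg_eq h] at hr2
        exact hr2.symm
      · rw [Equiv.swap_apply_of_ne_of_ne ha1 ha2]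
        have h3 := hr3 a.val a.isLt (fun hc => ha1 (Fin.ext hc)) (fun hc => ha2 (Fin.ext hc))
        rw [xg_eq a.isLt] at h3
        simp only [Fin.eta] at h3
        exact h3.symm
  exact Subgroup.mem_comap.2 (by rw [this]; exact hrH)

lemma conj_gen_mem
    (hs : ∀ i, i + 1 < n → ∃ s ∈ H, IsSigma n i s)
    (hr : ∀ i, i + 1 < n → ∃ r ∈ H, IsRho n i r)
    (k j : Fin n) (hkj : j ≠ k) :
    ∃ δ ∈ H, δ (FreeGroup.of k) = (FreeGroup.of j)⁻¹ * FreeGroup.of k * FreeGroup.of j ∧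
      ∀ m, m ≠ k → δ (FreeGroup.of m) = FreeGroup.of m := by
  have h1n : 1 < n := by
    by_contra hc
    push_neg at hc
    interval_cases n
    · exact k.elim0
    · exact hkj (Subsingleton.elim j k)
  have h01 : 0 + 1 < n := h1n
  obtain ⟨s0, hs0H, hs1, hs2, hs3⟩ := hs 0 h01
  obtain ⟨r0, hr0H, hr1, hr2, hr3⟩ := hr 0 h01
  have h0 : (0 : ℕ) < n := by omega
  set e0 : Fin n := ⟨0, h0⟩ with he0
  set e1 : Fin n := ⟨1, h1n⟩ with he1
  set g : MulAut (FreeGroup (Fin n)) := r0 * s0 with hg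
  have hgH : g ∈ H := H.mul_mem hr0H hs0H
  have hxg0 : xg n 0 = FreeGroup.of e0 := xg_eq h0
  have hxg1 : xg n (0 + 1) = FreeGroup.of e1 := by
    rw [xg_eq h01]
  rw [hxg0, hxg1] at hs1 hs2 hr1 hr2
  have gval : g (FreeGroup.of e1) = (FreeGroup.of e0)⁻¹ * FreeGroup.of e1 * FreeGroup.of e0 := by
    rw [hg, MulAut.mul_apply]
    rw [hs2, _root_.map_mul, _root_.map_mul, _root_.map_inv, hr2, hr1]
  have gfix : ∀ m : Fin n, m ≠ e1 → g (FreeGroup.of m) = FreeGroup.of m := by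
    intro m hm
    rw [hg, MulAut.mul_apply]
    by_cases hm0 : m = e0
    · subst hm0
      rw [hs1, hr2]
    · have hv0 : m.val ≠ 0 := fun hc => hm0 (Fin.ext hc)
      have hv1 : m.val ≠ 1 := fun hc => hm (Fin.ext hc)
      have h3 := hs3 m.val m.isLt hv0 hv1
      have h4 := hr3 m.val m.isLt hv0 hv1
      rw [xg_eq m.isLt] at h3 h4
      simp only [Fin.eta] at h3 h4
      show r0 (s0 (FreeGroup.of m)) = _
      rw [h3, h4]
  -- a permutation sending e0 to j and e1 to k
  have h01ne : e0 ≠ e1 := by rw [he0, he1]; simp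
  set k' : Fin n := Equiv.swap e0 j k with hk'
  have hk'0 : k' ≠ e0 := by
    intro hc
    have h := congrArg (Equiv.swap e0 j) hc
    rw [hk', Equiv.swap_apply_self, Equiv.swap_apply_left] at h
    exact hkj h.symm
  set τ : Equiv.Perm (Fin n) := (Equiv.swap e1 k').trans (Equiv.swap e0 j) with hτ
  have hτ0 : τ e0 = j := by
    rw [hτ]
    simp only [Equiv.trans_apply]
    rw [Equiv.swap_apply_of_ne_of_ne h01ne (Ne.symm hk'0), Equiv.swap_apply_left]
  have hτ1 : τ e1 = k := by
    rw [hτ]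
    simp only [Equiv.trans_apply]
    rw [Equiv.swap_apply_left, hk']
    exact Equiv.swap_apply_self e0 j k
  set P : MulAut (FreeGroup (Fin n)) := permHom n τ with hP
  have hPH : P ∈ H := permHom_mem hr τ
  refine ⟨P * g * P⁻¹, H.mul_mem (H.mul_mem hPH hgH) (H.inv_mem hPH), ?_, ?_⟩
  · have hPinv : P⁻¹ (FreeGroup.of k) = FreeGroup.of e1 := by
      rw [hP, ← _root_.map_inv (permHom n) τ, permHom_of, ← hτ1]
      simp
    rw [MulAut.mul_apply, MulAut.mul_apply, hPinv, gval]
    rw [_root_.map_mul, _root_.map_mul, _root_.map_inv]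
    rw [hP, permHom_of, permHom_of, hτ0, hτ1]
  · intro m hm
    have hPinv : P⁻¹ (FreeGroup.of m) = FreeGroup.of (τ⁻¹ m) := by
      rw [hP, ← _root_.map_inv (permHom n) τ, permHom_of]
    rw [MulAut.mul_apply, MulAut.mul_apply, hPinv]
    have hne1 : τ⁻¹ m ≠ e1 := by
      intro hc
      apply hm
      rw [← hτ1, ← hc]
      simp
    rw [gfix _ hne1, hP, permHom_of]
    simp

end Part3

section Part4

variable {n : ℕ} {H : Subgroup (MulAut (FreeGroup (Fin n)))}

lemma mk_single_false (a : Fin n) :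
    FreeGroup.mk [(a, false)] = (FreeGroup.of a)⁻¹ := by
  have h2 := FreeGroup.inv_mk (L := [(a, true)])
  simp only [FreeGroup.invRev, List.map_cons, List.map_nil, List.reverse_cons,
    List.reverse_nil, Bool.not_true, List.nil_append] at h2
  rw [← h2]; rfl

lemma mk_single_true (a : Fin n) :
    FreeGroup.mk [(a, true)] = FreeGroup.of a := rfl

lemma sum_norm_update (w : Fin n → FreeGroup (Fin n)) (i : Fin n) (v : FreeGroup (Fin n)) :
    ∑ m, ((Function.update w i v) m).norm =
      (∑ m ∈ Finset.univ \ {i}, (w m).norm) + v.norm := by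
  have hfun : ∀ m, ((Function.update w i v) m).norm =
      Function.update (fun m => (w m).norm) i v.norm m := by
    intro m
    by_cases hm : m = i
    · subst hm; simp
    · simp [Function.update_of_ne hm]
  rw [Finset.sum_congr rfl (fun m _ => hfun m),
    Finset.sum_update_of_mem (Finset.mem_univ i)]
  exact add_comm _ _

lemma conj_mem
    (hs : ∀ i, i + 1 < n → ∃ s ∈ H, IsSigma n i s)
    (hr : ∀ i, i + 1 < n → ∃ r ∈ H, IsRho n i r) :
    ∀ (N : ℕ) (β : MulAut (FreeGroup (Fin n))) (w : Fin n → FreeGroup (Fin n)),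
      (∀ i, β (FreeGroup.of i) = (w i)⁻¹ * FreeGroup.of i * w i) →
      (∑ i, (w i).norm) ≤ N → β ∈ H := by
  intro N
  induction N using Nat.strong_induction_on with
  | _ N IH =>
  intro β w hβ hN
  by_cases hall : ∀ i, w i = 1
  · have hβ1 : β = 1 := mulAut_ext fun a => by rw [hβ a, hall a]; simp
    rw [hβ1]; exact H.one_mem
  push_neg at hall
  obtain ⟨j0, hj0⟩ := hall
  have hNpos : 1 ≤ N := by
    have h1 : 1 ≤ (w j0).norm := by
      rcases Nat.eq_zero_or_pos ((w j0).norm) with h | h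
      · exact absurd (FreeGroup.norm_eq_zero.mp h) hj0
      · exact h
    calc 1 ≤ (w j0).norm := h1
      _ ≤ ∑ i, (w i).norm :=
          Finset.single_le_sum (f := fun i => (w i).norm)
            (fun i _ => Nat.zero_le _) (Finset.mem_univ j0)
      _ ≤ N := hN
  by_cases hcase1 : ∃ i : Fin n, ∃ p ∈ ((w i).toWord).head?, p.1 = i
  · -- strip a leading x_i^{±1} from w i
    obtain ⟨i, p, hp, hpi⟩ := hcase1
    rcases hW : (w i).toWord with _ | ⟨p0, t⟩
    · rw [hW] at hp; simp at hp
    rw [hW] at hp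
    simp only [List.head?_cons, Option.mem_some_iff] at hp
    subst hp
    have hRd : Rd (p0 :: t) := by rw [← hW]; exact rd_toWord _
    have hRdt : Rd t := hRd.tail
    set v : FreeGroup (Fin n) := FreeGroup.mk t with hv
    have hvt : v.toWord = t := toWord_mk_rd hRdt
    have hwi : w i = FreeGroup.mk [p0] * v := by
      rw [hv, FreeGroup.mul_mk, List.singleton_append, ← hW]
      exact (FreeGroup.mk_toWord).symm
    have hpcomm : (FreeGroup.mk [p0])⁻¹ * FreeGroup.of i * FreeGroup.mk [p0] =
        FreeGroup.of i := by
      obtain ⟨p1, s⟩ := p0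
      have hp1 : p1 = i := hpi
      subst hp1
      cases s
      · rw [mk_single_false]; group
      · rw [mk_single_true]; group
    have hβ' : ∀ m, β (FreeGroup.of m) =
        ((Function.update w i v) m)⁻¹ * FreeGroup.of m * (Function.update w i v) m := by
      intro m
      by_cases hm : m = i
      · subst hm
        rw [Function.update_self, hβ m, hwi, mul_inv_rev]
        calc v⁻¹ * (FreeGroup.mk [p0])⁻¹ * FreeGroup.of m * (FreeGroup.mk [p0] * v)
            = v⁻¹ * ((FreeGroup.mk [p0])⁻¹ * FreeGroup.of m * FreeGroup.mk [p0]) * v := by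
              group
          _ = v⁻¹ * FreeGroup.of m * v := by rw [hpcomm]
      · rw [Function.update_of_ne hm]
        exact hβ m
    have hsum : (∑ m, ((Function.update w i v) m).norm) + 1 ≤ ∑ m, (w m).norm := by
      rw [sum_norm_update]
      have h2 : ∑ m, (w m).norm = (∑ m ∈ Finset.univ \ {i}, (w m).norm) + (w i).norm := by
        exact (Finset.sum_eq_sum_sdiff_singleton_add (Finset.mem_univ i) _)
      have h3 : v.norm + 1 = (w i).norm := by
        show v.toWord.length + 1 = (w i).toWord.length
        rw [hvt, hW]; simp
      omega
    exact IH (N - 1) (by omega) β (Function.update w i v) hβ' (by omega)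
  by_cases hcase2 : ∃ (i k : Fin n) (s : Bool), ((i, s) :: (w i).toWord) <:+ (w k).toWord
  · obtain ⟨i, k, s, b, hb⟩ := hcase2
    have hik : i ≠ k := by
      intro h
      subst h
      have hlen := congrArg List.length hb
      simp at hlen
      omega
    obtain ⟨δ0, hδ0H, hδ0k, hδ0m⟩ := conj_gen_mem hs hr k i hik
    have hδ0inv_k : δ0⁻¹ (FreeGroup.of k) =
        FreeGroup.of i * FreeGroup.of k * (FreeGroup.of i)⁻¹ := by
      have hkey : δ0 (FreeGroup.of i * FreeGroup.of k * (FreeGroup.of i)⁻¹) =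
          FreeGroup.of k := by
        rw [_root_.map_mul, _root_.map_mul, _root_.map_inv, hδ0m i hik, hδ0k]
        group
      rw [show (δ0⁻¹ : MulAut (FreeGroup (Fin n))) = δ0.symm from rfl,
        MulEquiv.symm_apply_eq]
      exact hkey.symm
    have hδ0inv_m : ∀ m, m ≠ k → δ0⁻¹ (FreeGroup.of m) = FreeGroup.of m := by
      intro m hm
      rw [show (δ0⁻¹ : MulAut (FreeGroup (Fin n))) = δ0.symm from rfl,
        MulEquiv.symm_apply_eq, hδ0m m hm]
    set δ : MulAut (FreeGroup (Fin n)) := if s = true then δ0⁻¹ else δ0 with hδ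
    have hδH : δ ∈ H := by
      rw [hδ]
      by_cases hst : s = true
      · rw [if_pos hst]; exact H.inv_mem hδ0H
      · rw [if_neg hst]; exact hδ0H
    have hδm : ∀ m, m ≠ k → δ (FreeGroup.of m) = FreeGroup.of m := by
      intro m hm
      rw [hδ]
      by_cases hst : s = true
      · rw [if_pos hst]; exact hδ0inv_m m hm
      · rw [if_neg hst]; exact hδ0m m hm
    have hwk : w k = FreeGroup.mk b * FreeGroup.mk [(i, s)] * w i := by
      rw [FreeGroup.mul_mk]
      conv_rhs => rw [show w i = FreeGroup.mk ((w i).toWord) from (FreeGroup.mk_toWord).symm]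
      rw [FreeGroup.mul_mk]
      conv_lhs => rw [show w k = FreeGroup.mk ((w k).toWord) from (FreeGroup.mk_toWord).symm]
      congr 1
      rw [← hb]
      simp
    set w' := Function.update w k (FreeGroup.mk b * w i) with hw'
    have hβγ : ∀ m, (β * δ) (FreeGroup.of m) = (w' m)⁻¹ * FreeGroup.of m * w' m := by
      intro m
      rw [MulAut.mul_apply]
      by_cases hm : m = k
      · subst hm
        rw [hw', Function.update_self]
        cases s
        · rw [hδ, if_neg (by simp), hδ0k]
          rw [_root_.map_mul, _root_.map_mul, _root_.map_inv, hβ i, hβ m]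
          rw [hwk, mk_single_false]
          group
        · rw [hδ, if_pos rfl, hδ0inv_k]
          rw [_root_.map_mul, _root_.map_mul, _root_.map_inv, hβ i, hβ m]
          rw [hwk, mk_single_true]
          group
      · rw [hδm m hm, hβ m, hw', Function.update_of_ne hm]
    have hsum : (∑ m, (w' m).norm) + 1 ≤ ∑ m, (w m).norm := by
      rw [hw', sum_norm_update]
      have h2 : ∑ m, (w m).norm = (∑ m ∈ Finset.univ \ {k}, (w m).norm) + (w k).norm :=
        Finset.sum_eq_sum_sdiff_singleton_add (Finset.mem_univ k) _
      have h3 : (FreeGroup.mk b * w i).norm ≤ b.length + (w i).norm := by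
        calc (FreeGroup.mk b * w i).norm ≤ (FreeGroup.mk b).norm + (w i).norm :=
              FreeGroup.norm_mul_le _ _
          _ ≤ b.length + (w i).norm := by
              exact Nat.add_le_add_right FreeGroup.norm_mk_le _
      have h4 : (w k).norm = b.length + 1 + (w i).norm := by
        show (w k).toWord.length = b.length + 1 + (w i).toWord.length
        rw [← hb]; simp; omega
      omega
    have hγH : β * δ ∈ H :=
      IH (N - 1) (by omega) (β * δ) w' hβγ (by omega)
    have hβeq : β = (β * δ) * δ⁻¹ := by group
    rw [hβeq]
    exact H.mul_mem hγH (H.inv_mem hδH)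
  · -- impossible: the Nielsen property contradicts surjectivity
    exfalso
    push_neg at hcase1 hcase2
    set g : FreeGroup (Fin n) := β⁻¹ (FreeGroup.of j0) with hgdef
    have hβg : β g = FreeGroup.of j0 := by
      rw [hgdef]
      exact (MulEquiv.apply_symm_apply β _)
    have hgne : g ≠ 1 := by
      intro h
      rw [h, _root_.map_one] at hβg
      exact FreeGroup.one_ne_of j0 hβg
    have hLne : g.toWord ≠ [] := fun h => hgne (FreeGroup.toWord_eq_nil_iff.mp h)
    have hsplit : g.toWord.dropLast ++ [g.toWord.getLast hLne] = g.toWord :=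
      List.dropLast_append_getLast hLne
    obtain ⟨A, hA⟩ := nielsen β w hβ hcase1 hcase2 g.toWord.dropLast
      (g.toWord.getLast hLne) (by rw [hsplit]; exact rd_toWord g)
    rw [hsplit, FreeGroup.mk_toWord, hβg, FreeGroup.toWord_of] at hA
    have hlen := congrArg List.length hA
    simp only [List.length_append, List.length_cons, List.length_nil] at hlen
    have hA0 : A = [] := List.length_eq_zero_iff.mp (by omega)
    have hWnil : (w (g.toWord.getLast hLne).1).toWord = [] :=
      List.length_eq_zero_iff.mp (by omega)
    rw [hA0, hWnil, List.append_nil] at hA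
    simp only [List.nil_append] at hA
    have hlst : (j0, true) = g.toWord.getLast hLne := by
      injection hA
    apply hj0
    have hw1 : w ((j0, true).1) = 1 := by
      rw [hlst]
      exact FreeGroup.toWord_eq_nil_iff.mp hWnil
    exact hw1

end Part4

section Part5

variable {n : ℕ}

def PCSub (n : ℕ) : Subgroup (MulAut (FreeGroup (Fin n))) where
  carrier := PCSet n
  one_mem' := ⟨1, fun _ => 1, fun i => by simp⟩
  mul_mem' := by
    rintro α γ ⟨π, w, hw⟩ ⟨τ, v, hv⟩
    refine ⟨π * τ, fun i => w (τ i) * α (v i), fun i => ?_⟩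
    rw [MulAut.mul_apply, hv i, _root_.map_mul, _root_.map_mul, _root_.map_inv, hw (τ i)]
    rw [show (π * τ) i = π (τ i) from rfl]
    group
  inv_mem' := by
    rintro α ⟨π, w, hw⟩
    refine ⟨π⁻¹, fun j => (α⁻¹ (w (π⁻¹ j)))⁻¹, fun j => ?_⟩
    refine MulEquiv.injective α ?_
    have hαα : ∀ x : FreeGroup (Fin n), α (α⁻¹ x) = x :=
      fun x => MulEquiv.apply_symm_apply α x
    simp only [inv_inv, _root_.map_mul, _root_.map_inv, hαα, hw (π⁻¹ j)]
    rw [show π (π⁻¹ j) = j from Equiv.apply_symm_apply π j]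
    group

lemma sigma_mem_PCSet {i : ℕ} (h : i + 1 < n) {s : MulAut (FreeGroup (Fin n))}
    (hsig : IsSigma n i s) : s ∈ PCSet n := by
  obtain ⟨h1, h2, h3⟩ := hsig
  have hin : i < n := Nat.lt_of_succ_lt h
  rw [xg_eq hin, xg_eq h] at h1 h2
  have hne : (⟨i, hin⟩ : Fin n) ≠ ⟨i + 1, h⟩ := by simp
  refine ⟨Equiv.swap ⟨i, hin⟩ ⟨i + 1, h⟩,
    fun m => if m = ⟨i + 1, h⟩ then FreeGroup.of ⟨i + 1, h⟩ else 1, fun m => ?_⟩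
  beta_reduce
  by_cases hm1 : m = ⟨i, hin⟩
  · subst hm1
    rw [if_neg hne, Equiv.swap_apply_left, h1]
    simp
  · by_cases hm2 : m = ⟨i + 1, h⟩
    · subst hm2
      rw [if_pos rfl, Equiv.swap_apply_right, h2]
    · rw [if_neg hm2, Equiv.swap_apply_of_ne_of_ne hm1 hm2]
      have h3' := h3 m.val m.isLt (fun hc => hm1 (Fin.ext hc)) (fun hc => hm2 (Fin.ext hc))
      rw [xg_eq m.isLt] at h3'
      simp only [Fin.eta] at h3'
      rw [h3']
      simp

lemma rho_mem_PCSet {i : ℕ} (h : i + 1 < n) {r : MulAut (FreeGroup (Fin n))}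
    (hrho : IsRho n i r) : r ∈ PCSet n := by
  obtain ⟨h1, h2, h3⟩ := hrho
  have hin : i < n := Nat.lt_of_succ_lt h
  rw [xg_eq hin, xg_eq h] at h1 h2
  refine ⟨Equiv.swap ⟨i, hin⟩ ⟨i + 1, h⟩, fun _ => 1, fun m => ?_⟩
  by_cases hm1 : m = ⟨i, hin⟩
  · subst hm1
    rw [Equiv.swap_apply_left, h1]
    simp
  · by_cases hm2 : m = ⟨i + 1, h⟩
    · subst hm2
      rw [Equiv.swap_apply_right, h2]
      simp
    · rw [Equiv.swap_apply_of_ne_of_ne hm1 hm2]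
      have h3' := h3 m.val m.isLt (fun hc => hm1 (Fin.ext hc)) (fun hc => hm2 (Fin.ext hc))
      rw [xg_eq m.isLt] at h3'
      simp only [Fin.eta] at h3'
      rw [h3']
      simp

end Part5


/-- For `n ≥ 1`, the set `PC_n` of permutation-conjugacy automorphisms
is a subgroup of `Aut(F_n)`, namely it coincides with the subgroup generated by
`σ_1, …, σ_{n-1}, ρ_1, …, ρ_{n-1}` (indices `0`-based here). -/
theorem pc_eq_closure_sigma_rho (n : ℕ) (hn : 1 ≤ n)
    (σ ρ : ℕ → MulAut (FreeGroup (Fin n)))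
    (hσ : ∀ i, i + 1 < n → IsSigma n i (σ i))
    (hρ : ∀ i, i + 1 < n → IsRho n i (ρ i)) :
    PCSet n =
      ↑(Subgroup.closure
          ({g | ∃ i, i + 1 < n ∧ g = σ i} ∪ {g | ∃ i, i + 1 < n ∧ g = ρ i})) := by
  set K := Subgroup.closure
      ({g | ∃ i, i + 1 < n ∧ g = σ i} ∪ {g | ∃ i, i + 1 < n ∧ g = ρ i}) with hK
  have hsK : ∀ i, i + 1 < n → ∃ s ∈ K, IsSigma n i s := fun i hi =>
    ⟨σ i, Subgroup.subset_closure (Set.mem_union_left _ ⟨i, hi, rfl⟩), hσ i hi⟩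
  have hrK : ∀ i, i + 1 < n → ∃ r ∈ K, IsRho n i r := fun i hi =>
    ⟨ρ i, Subgroup.subset_closure (Set.mem_union_right _ ⟨i, hi, rfl⟩), hρ i hi⟩
  apply Set.Subset.antisymm
  · rintro α ⟨π, w, hw⟩
    set β : MulAut (FreeGroup (Fin n)) := (permHom n π)⁻¹ * α with hβdef
    have hβ : ∀ i, β (FreeGroup.of i) =
        ((permHom n π)⁻¹ (w i))⁻¹ * FreeGroup.of i * ((permHom n π)⁻¹ (w i)) := by
      intro i
      rw [hβdef, MulAut.mul_apply, hw i, _root_.map_mul, _root_.map_mul, _root_.map_inv]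
      have hof : (permHom n π)⁻¹ (FreeGroup.of (π i)) = FreeGroup.of i := by
        rw [← _root_.map_inv (permHom n) π, permHom_of, ← Equiv.Perm.mul_apply, inv_mul_cancel, Equiv.Perm.one_apply]
      rw [hof]
    have hβK : β ∈ K :=
      conj_mem hsK hrK (∑ i, (((permHom n π)⁻¹ (w i))).norm) β _ hβ le_rfl
    have hα : α = permHom n π * β := by rw [hβdef]; group
    rw [hα]
    exact K.mul_mem (permHom_mem hrK π) hβK
  · have hle : K ≤ PCSub n := by
      rw [hK]
      refine (Subgroup.closure_le (PCSub n)).2 ?_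
      rintro g (⟨i, hi, rfl⟩ | ⟨i, hi, rfl⟩)
      · exact sigma_mem_PCSet hi (hσ i hi)
      · exact rho_mem_PCSet hi (hρ i hi)
    intro a ha
    exact hle ha


end LoopBraidGroups
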